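/- For every n=(n₁,n₂,n₃)∈ℤ³ with all nᵢ≥1 and every triangle △ of the three-directional grid G, the number of lattice translates active on △ is φ(n) = n₁n₂ + n₁n₃ + n₂n₃; that is, the set {v∈ℤ² : B_n(·−v) does not vanish identically on △} has exactly n₁n₂ + n₁n₃ + n₂n₃ elements. -/
import Mathlib


/- ## The three-directional (type-I) grid -/

noncomputable section

open MvPolynomial Set Function

/-- Points of the plane. -/
abbrev Pt := ℝ × ℝ

/-- Bivariate real polynomials `ℝ[x,y]`. -/
abbrev BPoly := MvPolynomial (Fin 2) ℝ

/-- Evaluation of a bivariate polynomial at a point of the plane. -/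
def evalP (q : BPoly) (p : Pt) : ℝ := MvPolynomial.eval ![p.1, p.2] q

/-- Triangles of the three-directional grid `G`:  `⟨v, false⟩` is the "lower"
triangle with vertices `v, v+(1,0), v+(1,1)`, and `⟨v, true⟩` is the "upper"
triangle with vertices `v, v+(0,1), v+(1,1)`. -/
structure Tri where
  v : ℤ × ℤ
  up : Bool
deriving DecidableEq

namespace Tri

/-- The open triangle in the plane realizing a combinatorial triangle. -/
def toSet (T : Tri) : Set Pt :=
  if T.up then
    {p | (T.v.1 : ℝ) < p.1 ∧ p.1 - (T.v.1 : ℝ) < p.2 - (T.v.2 : ℝ) ∧ p.2 < (T.v.2 : ℝ) + 1}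
  else
    {p | (T.v.2 : ℝ) < p.2 ∧ p.2 - (T.v.2 : ℝ) < p.1 - (T.v.1 : ℝ) ∧ p.1 < (T.v.1 : ℝ) + 1}

/-- The closed triangle. -/
def cl (T : Tri) : Set Pt := closure T.toSet

/-- The three lattice vertices of a triangle. -/
def vertices (T : Tri) : Finset (ℤ × ℤ) :=
  if T.up then {T.v, (T.v.1, T.v.2 + 1), (T.v.1 + 1, T.v.2 + 1)}
  else {T.v, (T.v.1 + 1, T.v.2), (T.v.1 + 1, T.v.2 + 1)}

end Tri

/-- Edges of the grid: a lattice point together with a direction type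
(`0 ↦ e₁ = (1,0)`, `1 ↦ e₂ = (0,1)`, `2 ↦ e₃ = (1,1)`); the edge of type `i`
at `v` joins `v` to `v + eᵢ`. -/
abbrev Edge := (ℤ × ℤ) × Fin 3

/-- The three direction vectors `e₁, e₂, e₃`. -/
def dirZ : Fin 3 → ℤ × ℤ := ![(1, 0), (0, 1), (1, 1)]

/-- The three edges of a triangle. -/
def Tri.edges (T : Tri) : Finset Edge :=
  if T.up then {((T.v.1, T.v.2 + 1), 0), (T.v, 1), (T.v, 2)}
  else {(T.v, 0), ((T.v.1 + 1, T.v.2), 1), (T.v, 2)}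

/-- The open segment realizing an edge. -/
def Edge.seg (ε : Edge) : Set Pt :=
  {p | ∃ t : ℝ, 0 < t ∧ t < 1 ∧
    p = ((ε.1.1 : ℝ) + t * ((dirZ ε.2).1 : ℝ), (ε.1.2 : ℝ) + t * ((dirZ ε.2).2 : ℝ))}

/-- `M*`: the union of the closed triangles of a multicell domain. -/
def Mstar (M : Finset Tri) : Set Pt := ⋃ T ∈ M, T.cl

/-- `ℙ(M,V)`: continuous functions on `M*` whose restriction to each triangle
of `M` is the restriction of a polynomial in `V`. -/
def PP (M : Finset Tri) (V : Set BPoly) : Set (Pt → ℝ) :=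
  {f | ContinuousOn f (Mstar M) ∧ ∀ T ∈ M, ∃ q ∈ V, EqOn f (evalP q) T.toSet}

/-- The diamond of an edge: union of the closed triangles of `M` having `ε`
as an edge. -/
def diamond (M : Finset Tri) (ε : Edge) : Set Pt :=
  ⋃ T ∈ M.filter (fun T => ε ∈ T.edges), T.cl

/-- The spline space with edge smoothness `d` on the multicell domain `M`:
piecewise polynomials (pieces from `V`) which are `C^{dᵢ}` on the diamond of
every edge of type `i` of `M`. -/
def SplineSpace (M : Finset Tri) (V : Set BPoly) (d : Fin 3 → ℕ) : Set (Pt → ℝ) :=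
  {f | f ∈ PP M V ∧
    ∀ ε : Edge, (∃ T ∈ M, ε ∈ T.edges) → ContDiffOn ℝ (d ε.2) f (diamond M ε)}

/-- Directional derivative of a polynomial along an integer vector. -/
def dirD (e : ℤ × ℤ) (q : BPoly) : BPoly :=
  (e.1 : ℝ) • MvPolynomial.pderiv (0 : Fin 2) q + (e.2 : ℝ) • MvPolynomial.pderiv (1 : Fin 2) q

/-- The mixed directional derivative operator
`D_s = (∂_{e₁})^{s₁} (∂_{e₂})^{s₂} (∂_{e₃})^{s₃}`. -/
def Dmix (s : Fin 3 → ℕ) (q : BPoly) : BPoly :=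
  (dirD (dirZ 0))^[s 0] ((dirD (dirZ 1))^[s 1] ((dirD (dirZ 2))^[s 2] q))

/-- The index sets `Iᵢ^d`; `I₁^d = {s | s₂+s₃ ≤ d₁}` and cyclically. -/
def Iset (d : Fin 3 → ℕ) (i : Fin 3) : Set (Fin 3 → ℕ) :=
  {s | s (i + 1) + s (i + 2) ≤ d i}

/-- Two triangles of the grid are adjacent if they are distinct and share an edge. -/
def Adj (T T' : Tri) : Prop := T ≠ T' ∧ ∃ ε : Edge, ε ∈ T.edges ∧ ε ∈ T'.edges

/-- `c` is an edge-connected chain of length `m` from `T` to `T'`. -/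
def TriIsChain (T T' : Tri) (m : ℕ) (c : ℕ → Tri) : Prop :=
  c 0 = T ∧ c m = T' ∧ ∀ k < m, Adj (c k) (c (k + 1))

/-- The set of types of the edges crossed by a chain. -/
def chainTypes (m : ℕ) (c : ℕ → Tri) : Set (Fin 3) :=
  {i | ∃ k < m, ∃ ε : Edge, ε.2 = i ∧ ε ∈ (c k).edges ∧ ε ∈ (c (k + 1)).edges}

/-- Minimal length of an edge-connected chain between two triangles. -/
def minLen (T T' : Tri) : ℕ := sInf {m | ∃ c, TriIsChain T T' m c}

/-- The smoothness type `SmType(△,△')`: the types of the edges crossed by a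
shortest edge-connected chain from `△` to `△'`. -/
def SmType (T T' : Tri) : Set (Fin 3) :=
  {i | ∃ c, TriIsChain T T' (minLen T T') c ∧ i ∈ chainTypes (minLen T T') c}

/-- `q` is the polynomial piece of `f` on the triangle `T`. -/
def IsPiece (f : Pt → ℝ) (T : Tri) (q : BPoly) : Prop := EqOn f (evalP q) T.toSet

/-- The strongly regular spline space `Ŝ^d(M,V)`: piecewise polynomials such
that for any two triangles of `M` with intersecting closures, the derivatives
`D_s`, `s ∈ ⋂_{i ∈ SmType(△,△')} Iᵢ^d`, of the two polynomial pieces agree on the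
intersection of the closures (i.e. `D_s f` is continuous there). -/
def StrongSpline (M : Finset Tri) (V : Set BPoly) (d : Fin 3 → ℕ) : Set (Pt → ℝ) :=
  {f | f ∈ PP M V ∧
    ∀ T ∈ M, ∀ T' ∈ M, (T.cl ∩ T'.cl).Nonempty →
      ∀ s : Fin 3 → ℕ, (∀ i ∈ SmType T T', s ∈ Iset d i) →
        ∀ q q' : BPoly, IsPiece f T q → IsPiece f T' q' →
          ∀ x ∈ T.cl ∩ T'.cl, evalP (Dmix s q) x = evalP (Dmix s q') x}

/-- Kissing triangles: the closures intersect in exactly one point. -/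
def Kissing (T T' : Tri) : Prop := ∃ p : Pt, T.cl ∩ T'.cl = {p}

/-- An over-concave vertex of `M`: exactly one triangle of `star(ν)` is
missing from `M`. -/
def OverConcave (M : Finset Tri) (ν : ℤ × ℤ) : Prop :=
  ∃! T : Tri, ν ∈ T.vertices ∧ T ∉ M

/- ## Type-I box splines -/

/-- The Courant hat function `B_{(1,1,1)}`: the piecewise linear function on
`G` supported on `star((1,1))` with value `1` at `(1,1)` and `0` at all other
lattice points. -/
def hat (p : Pt) : ℝ :=
  max 0 (min (min (min p.1 p.2) (min (2 - p.1) (2 - p.2)))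
             (min (1 - (p.1 - p.2)) (1 + (p.1 - p.2))))

/-- The type-I box spline `B_{(n₁,n₂,n₃)}`, defined by repeated directional
convolution starting from the Courant hat function (the result is independent
of the order of the convolutions); junk value `0` if some `nᵢ = 0`. -/
noncomputable def boxN : ℕ → ℕ → ℕ → Pt → ℝ
  | 0, _, _, _ => 0
  | _ + 1, 0, _, _ => 0
  | _ + 1, _ + 1, 0, _ => 0
  | 1, 1, 1, p => hat p
  | a + 2, b + 1, c + 1, p =>
      ∫ t in (0:ℝ)..1, boxN (a + 1) (b + 1) (c + 1) (p.1 - t, p.2)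
  | 1, b + 2, c + 1, p =>
      ∫ t in (0:ℝ)..1, boxN 1 (b + 1) (c + 1) (p.1, p.2 - t)
  | 1, 1, c + 2, p =>
      ∫ t in (0:ℝ)..1, boxN 1 1 (c + 1) (p.1 - t, p.2 - t)
  termination_by a b c _ => a + b + c
  decreasing_by all_goals omega

/-- The translate `B_n(· - w)` of the box spline. -/
def trBox (n₁ n₂ n₃ : ℕ) (w : ℤ × ℤ) (p : Pt) : ℝ :=
  boxN n₁ n₂ n₃ (p.1 - (w.1 : ℝ), p.2 - (w.2 : ℝ))

/-- `Supp_n(△̂)`: lattice translates of `B_n` that do not vanish identically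
on the triangle `T`. -/
def activeSet (n₁ n₂ n₃ : ℕ) (T : Tri) : Set (ℤ × ℤ) :=
  {w | ¬ ∀ p ∈ T.toSet, trBox n₁ n₂ n₃ w p = 0}

/-- `c` is the coefficient vector of the polynomial `q` with respect to the
active box-spline translates on `T`:  `q|_T = Σ_β λ_T^β(q)·β|_T`. -/
def Represents (n₁ n₂ n₃ : ℕ) (T : Tri) (q : BPoly) (c : (ℤ × ℤ) →₀ ℝ) : Prop :=
  ↑c.support ⊆ activeSet n₁ n₂ n₃ T ∧
    ∀ p ∈ T.toSet, evalP q p = c.sum fun w a => a * trBox n₁ n₂ n₃ w p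

/-- `V_n` (relative to the triangle `T`): polynomials whose restriction to `T`
is a linear combination of the active box-spline translates on `T`. -/
def VSpace (n₁ n₂ n₃ : ℕ) (T : Tri) : Set BPoly :=
  {q | ∃ c, Represents n₁ n₂ n₃ T q c}


/- ## Auxiliary analytic lemmas -/

/-- The open zonotope supporting `B_n`. -/
def Zop (n₁ n₂ n₃ : ℕ) : Set Pt :=
  {p | 0 < p.1 ∧ p.1 < (n₁ : ℝ) + n₃ ∧ 0 < p.2 ∧ p.2 < (n₂ : ℝ) + n₃ ∧
       -(n₂ : ℝ) < p.1 - p.2 ∧ p.1 - p.2 < (n₁ : ℝ)}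

lemma aux_integral_pos (f : ℝ → ℝ) (hf : Continuous f) (h0 : ∀ t, 0 ≤ f t)
    (t₀ : ℝ) (ht1 : 0 < t₀) (ht2 : t₀ < 1) (hpos : 0 < f t₀) :
    0 < ∫ t in (0:ℝ)..1, f t := by
  rw [intervalIntegral.integral_of_le (by norm_num)]
  rw [MeasureTheory.setIntegral_pos_iff_support_of_nonneg_ae
    (Filter.Eventually.of_forall fun t => h0 t)
    (hf.integrableOn_Icc.mono_set Set.Ioc_subset_Icc_self)]
  have hopen : IsOpen (Function.support f ∩ Set.Ioo 0 1) :=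
    (hf.isOpen_support).inter isOpen_Ioo
  have hne : (Function.support f ∩ Set.Ioo 0 1).Nonempty :=
    ⟨t₀, by simp [Function.mem_support, ne_of_gt hpos], ht1, ht2⟩
  calc (0:ENNReal) < MeasureTheory.volume (Function.support f ∩ Set.Ioo 0 1) :=
        hopen.measure_pos _ hne
    _ ≤ MeasureTheory.volume (Function.support f ∩ Set.Ioc 0 1) :=
        MeasureTheory.measure_mono (Set.inter_subset_inter_right _ Set.Ioo_subset_Ioc_self)

lemma aux_integral_zero (f : ℝ → ℝ) (h : ∀ t ∈ Set.Icc (0:ℝ) 1, f t = 0) :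
    ∫ t in (0:ℝ)..1, f t = 0 := by
  rw [intervalIntegral.integral_congr (g := fun _ => 0)
    (fun t ht => h t (by simpa [Set.uIcc_of_le (by norm_num : (0:ℝ) ≤ 1)] using ht))]
  simp

/-- Generic convolution step. -/
lemma conv_props (g : Pt → ℝ) (e : Pt) (Z Z' : Set Pt)
    (hg : Continuous g) (hg0 : ∀ p, 0 ≤ g p)
    (hgpos : ∀ p ∈ Z', 0 < g p) (hgz : ∀ p, p ∉ Z' → g p = 0)
    (hfwd : ∀ p : Pt, ∀ t : ℝ, 0 ≤ t → t ≤ 1 →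
      ((p.1 - t * e.1, p.2 - t * e.2) : Pt) ∈ Z' → p ∈ Z)
    (hbwd : ∀ p ∈ Z, ∃ t : ℝ, 0 < t ∧ t < 1 ∧
      ((p.1 - t * e.1, p.2 - t * e.2) : Pt) ∈ Z') :
    Continuous (fun p : Pt => ∫ t in (0:ℝ)..1, g (p.1 - t * e.1, p.2 - t * e.2)) ∧
    (∀ p : Pt, 0 ≤ ∫ t in (0:ℝ)..1, g (p.1 - t * e.1, p.2 - t * e.2)) ∧
    (∀ p ∈ Z, 0 < ∫ t in (0:ℝ)..1, g (p.1 - t * e.1, p.2 - t * e.2)) ∧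
    (∀ p : Pt, p ∉ Z → ∫ t in (0:ℝ)..1, g (p.1 - t * e.1, p.2 - t * e.2) = 0) := by
  have hcont : ∀ p : Pt, Continuous fun t : ℝ => g (p.1 - t * e.1, p.2 - t * e.2) := by
    intro p; fun_prop
  refine ⟨?_, ?_, ?_, ?_⟩
  · apply intervalIntegral.continuous_parametric_intervalIntegral_of_continuous
      (f := fun (p : Pt) (t : ℝ) => g (p.1 - t * e.1, p.2 - t * e.2))
    · fun_prop
    · exact continuous_const
  · intro p
    exact intervalIntegral.integral_nonneg (by norm_num) (fun t _ => hg0 _)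
  · intro p hp
    obtain ⟨t₀, h1, h2, hmem⟩ := hbwd p hp
    exact aux_integral_pos _ (hcont p) (fun t => hg0 _) t₀ h1 h2 (hgpos _ hmem)
  · intro p hp
    apply aux_integral_zero
    intro t ht
    exact hgz _ fun hmem => hp (hfwd p t ht.1 ht.2 hmem)

theorem boxN_props (n₁ n₂ n₃ : ℕ) (h₁ : 1 ≤ n₁) (h₂ : 1 ≤ n₂) (h₃ : 1 ≤ n₃) :
    Continuous (boxN n₁ n₂ n₃) ∧ (∀ p, 0 ≤ boxN n₁ n₂ n₃ p) ∧
    (∀ p ∈ Zop n₁ n₂ n₃, 0 < boxN n₁ n₂ n₃ p) ∧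
    (∀ p, p ∉ Zop n₁ n₂ n₃ → boxN n₁ n₂ n₃ p = 0) := by
  match n₁, n₂, n₃ with
  | 1, 1, 1 =>
    have hhat : boxN 1 1 1 = hat := by funext p; rw [boxN]
    rw [hhat]
    refine ⟨by unfold hat; fun_prop, fun p => le_max_left _ _, ?_, ?_⟩
    · intro p hp
      obtain ⟨a1, a2, a3, a4, a5, a6⟩ := hp
      push_cast at a2 a4 a5 a6
      unfold hat
      have : (0:ℝ) < min (min (min p.1 p.2) (min (2 - p.1) (2 - p.2)))
             (min (1 - (p.1 - p.2)) (1 + (p.1 - p.2))) := by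
        simp only [lt_min_iff]
        refine ⟨⟨⟨a1, a3⟩, ?_, ?_⟩, ?_, ?_⟩ <;> linarith
      exact lt_max_of_lt_right this
    · intro p hp
      unfold hat
      set m := min (min (min p.1 p.2) (min (2 - p.1) (2 - p.2)))
             (min (1 - (p.1 - p.2)) (1 + (p.1 - p.2))) with hm
      have b1 : m ≤ p.1 := le_trans (min_le_left _ _) (le_trans (min_le_left _ _) (min_le_left _ _))
      have b2 : m ≤ p.2 := le_trans (min_le_left _ _) (le_trans (min_le_left _ _) (min_le_right _ _))
      have b3 : m ≤ 2 - p.1 := le_trans (min_le_left _ _) (le_trans (min_le_right _ _) (min_le_left _ _))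
      have b4 : m ≤ 2 - p.2 := le_trans (min_le_left _ _) (le_trans (min_le_right _ _) (min_le_right _ _))
      have b5 : m ≤ 1 - (p.1 - p.2) := le_trans (min_le_right _ _) (min_le_left _ _)
      have b6 : m ≤ 1 + (p.1 - p.2) := le_trans (min_le_right _ _) (min_le_right _ _)
      apply max_eq_left
      simp only [Zop, Set.mem_setOf_eq, not_and_or, not_lt] at hp
      push_cast at hp
      rcases hp with h | h | h | h | h | h <;> linarith
  | a + 2, b + 1, c + 1 =>
    obtain ⟨ihc, ih0, ihpos, ihz⟩ :=
      boxN_props (a + 1) (b + 1) (c + 1) (by omega) (by omega) (by omega)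
    have heq : boxN (a + 2) (b + 1) (c + 1) = fun p : Pt =>
        ∫ t in (0:ℝ)..1, boxN (a + 1) (b + 1) (c + 1)
          (p.1 - t * ((1:ℝ), (0:ℝ)).1, p.2 - t * ((1:ℝ), (0:ℝ)).2) := by
      funext p; rw [boxN]; norm_num
    rw [heq]
    apply conv_props _ _ _ (Zop (a + 1) (b + 1) (c + 1)) ihc ih0 ihpos ihz
    · rintro p t ht0 ht1 ⟨a1, a2, a3, a4, a5, a6⟩
      simp only at a1 a2 a3 a4 a5 a6
      refine ⟨?_, ?_, ?_, ?_, ?_, ?_⟩ <;> push_cast at * <;> linarith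
    · rintro p ⟨a1, a2, a3, a4, a5, a6⟩
      push_cast at a2 a4 a5 a6
      set x := p.1; set y := p.2
      set L : ℝ := max (max (x - (a + 1 + (c + 1))) (x - y - (a + 1))) 0 with hL
      set U : ℝ := min (min x (x - y + (b + 1))) 1 with hU
      have hLU : L < U := by
        simp only [hL, hU, max_lt_iff, lt_min_iff]
        and_intros <;> linarith
      refine ⟨(L + U) / 2, ?_, ?_, ?_, ?_, ?_, ?_, ?_, ?_⟩
      · have : (0:ℝ) ≤ L := le_max_right _ _
        linarith
      · have : U ≤ 1 := min_le_right _ _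
        linarith
      all_goals {
        have l1 : x - (a + 1 + (c + 1)) ≤ L := le_trans (le_max_left _ _) (le_max_left _ _)
        have l2 : x - y - (a + 1) ≤ L := le_trans (le_max_right _ _) (le_max_left _ _)
        have u1 : U ≤ x := le_trans (min_le_left _ _) (min_le_left _ _)
        have u2 : U ≤ x - y + (b + 1) := le_trans (min_le_left _ _) (min_le_right _ _)
        simp only
        push_cast
        linarith }
  | 1, b + 2, c + 1 =>
    obtain ⟨ihc, ih0, ihpos, ihz⟩ :=
      boxN_props 1 (b + 1) (c + 1) (by omega) (by omega) (by omega)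
    have heq : boxN 1 (b + 2) (c + 1) = fun p : Pt =>
        ∫ t in (0:ℝ)..1, boxN 1 (b + 1) (c + 1)
          (p.1 - t * ((0:ℝ), (1:ℝ)).1, p.2 - t * ((0:ℝ), (1:ℝ)).2) := by
      funext p; rw [boxN]; norm_num
    rw [heq]
    apply conv_props _ _ _ (Zop 1 (b + 1) (c + 1)) ihc ih0 ihpos ihz
    · rintro p t ht0 ht1 ⟨a1, a2, a3, a4, a5, a6⟩
      simp only at a1 a2 a3 a4 a5 a6
      refine ⟨?_, ?_, ?_, ?_, ?_, ?_⟩ <;> push_cast at * <;> linarith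
    · rintro p ⟨a1, a2, a3, a4, a5, a6⟩
      push_cast at a2 a4 a5 a6
      set x := p.1; set y := p.2
      set L : ℝ := max (max (y - (b + 1 + (c + 1))) (y - x - (b + 1))) 0 with hL
      set U : ℝ := min (min y (1 - (x - y))) 1 with hU
      have hLU : L < U := by
        simp only [hL, hU, max_lt_iff, lt_min_iff]
        and_intros <;> linarith
      refine ⟨(L + U) / 2, ?_, ?_, ?_, ?_, ?_, ?_, ?_, ?_⟩
      · have : (0:ℝ) ≤ L := le_max_right _ _
        linarith
      · have : U ≤ 1 := min_le_right _ _
        linarith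
      all_goals {
        have l1 : y - (b + 1 + (c + 1)) ≤ L := le_trans (le_max_left _ _) (le_max_left _ _)
        have l2 : y - x - (b + 1) ≤ L := le_trans (le_max_right _ _) (le_max_left _ _)
        have u1 : U ≤ y := le_trans (min_le_left _ _) (min_le_left _ _)
        have u2 : U ≤ 1 - (x - y) := le_trans (min_le_left _ _) (min_le_right _ _)
        simp only
        push_cast
        linarith }
  | 1, 1, c + 2 =>
    obtain ⟨ihc, ih0, ihpos, ihz⟩ :=
      boxN_props 1 1 (c + 1) (by omega) (by omega) (by omega)
    have heq : boxN 1 1 (c + 2) = fun p : Pt =>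
        ∫ t in (0:ℝ)..1, boxN 1 1 (c + 1)
          (p.1 - t * ((1:ℝ), (1:ℝ)).1, p.2 - t * ((1:ℝ), (1:ℝ)).2) := by
      funext p; rw [boxN]; norm_num
    rw [heq]
    apply conv_props _ _ _ (Zop 1 1 (c + 1)) ihc ih0 ihpos ihz
    · rintro p t ht0 ht1 ⟨a1, a2, a3, a4, a5, a6⟩
      simp only at a1 a2 a3 a4 a5 a6
      refine ⟨?_, ?_, ?_, ?_, ?_, ?_⟩ <;> push_cast at * <;> linarith
    · rintro p ⟨a1, a2, a3, a4, a5, a6⟩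
      push_cast at a2 a4 a5 a6
      set x := p.1; set y := p.2
      set L : ℝ := max (max (x - (1 + (c + 1))) (y - (1 + (c + 1)))) 0 with hL
      set U : ℝ := min (min x y) 1 with hU
      have hLU : L < U := by
        simp only [hL, hU, max_lt_iff, lt_min_iff]
        and_intros <;> linarith
      refine ⟨(L + U) / 2, ?_, ?_, ?_, ?_, ?_, ?_, ?_, ?_⟩
      · have : (0:ℝ) ≤ L := le_max_right _ _
        linarith
      · have : U ≤ 1 := min_le_right _ _
        linarith
      all_goals {
        have l1 : x - (1 + (c + 1)) ≤ L := le_trans (le_max_left _ _) (le_max_left _ _)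
        have l2 : y - (1 + (c + 1)) ≤ L := le_trans (le_max_right _ _) (le_max_left _ _)
        have u1 : U ≤ x := le_trans (min_le_left _ _) (min_le_left _ _)
        have u2 : U ≤ y := le_trans (min_le_left _ _) (min_le_right _ _)
        simp only
        push_cast
        linarith }
  termination_by n₁ + n₂ + n₃

lemma mem_activeSet_iff (n₁ n₂ n₃ : ℕ) (h₁ : 1 ≤ n₁) (h₂ : 1 ≤ n₂) (h₃ : 1 ≤ n₃)
    (T : Tri) (w : ℤ × ℤ) :
    w ∈ activeSet n₁ n₂ n₃ T ↔
      ∃ p ∈ T.toSet, ((p.1 - (w.1 : ℝ), p.2 - (w.2 : ℝ)) : Pt) ∈ Zop n₁ n₂ n₃ := by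
  obtain ⟨_, _, hpos, hz⟩ := boxN_props n₁ n₂ n₃ h₁ h₂ h₃
  simp only [activeSet, trBox, Set.mem_setOf_eq]
  push_neg
  constructor
  · rintro ⟨p, hp, hne⟩
    exact ⟨p, hp, by by_contra h; exact hne (hz _ h)⟩
  · rintro ⟨p, hp, hm⟩
    exact ⟨p, hp, ne_of_gt (hpos _ hm)⟩

/-- The counting lemma for the normalized hexagon. -/
lemma countL (n₁ n₂ : ℕ) (h₁ : 1 ≤ n₁) (h₂ : 1 ≤ n₂) (n₃ : ℕ) :
    ((Finset.Icc (1:ℤ) ((n₁:ℤ) + n₃) ×ˢ Finset.Icc (1:ℤ) ((n₂:ℤ) + n₃)).filter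
      (fun w : ℤ × ℤ => 1 - (n₂:ℤ) ≤ w.1 - w.2 ∧ w.1 - w.2 ≤ (n₁:ℤ))).card
      = n₁ * n₂ + n₁ * n₃ + n₂ * n₃ := by
  obtain ⟨k, rfl⟩ : ∃ k, n₁ = k + 1 := ⟨n₁ - 1, by omega⟩
  induction n₃ with
  | zero =>
    rw [Finset.filter_true_of_mem (by
      rintro ⟨a, b⟩ hab
      simp only [Finset.mem_product, Finset.mem_Icc] at hab
      constructor <;> omega)]
    rw [Finset.card_product, Int.card_Icc, Int.card_Icc]
    have e1 : ((↑(k + 1) : ℤ) + (↑(0:ℕ) : ℤ) + 1 - 1).toNat = k + 1 := by omega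
    have e2 : ((n₂ : ℤ) + (↑(0:ℕ) : ℤ) + 1 - 1).toNat = n₂ := by omega
    rw [e1, e2]; ring
  | succ m ih =>
    have key : ((Finset.Icc (1:ℤ) ((k+1:ℕ) + (m+1:ℕ)) ×ˢ
          Finset.Icc (1:ℤ) ((n₂:ℤ) + (m+1:ℕ))).filter
        (fun w : ℤ × ℤ => 1 - (n₂:ℤ) ≤ w.1 - w.2 ∧ w.1 - w.2 ≤ ((k+1:ℕ):ℤ)))
      = ((Finset.Icc (1:ℤ) ((k+1:ℕ) + (m:ℕ)) ×ˢ
          Finset.Icc (1:ℤ) ((n₂:ℤ) + (m:ℕ))).filter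
        (fun w : ℤ × ℤ => 1 - (n₂:ℤ) ≤ w.1 - w.2 ∧ w.1 - w.2 ≤ ((k+1:ℕ):ℤ)))
        ∪ ({((k:ℤ) + m + 2)} ×ˢ Finset.Icc ((m:ℤ) + 1) ((n₂:ℤ) + m + 1))
        ∪ (Finset.Icc ((m:ℤ) + 2) ((k:ℤ) + m + 1) ×ˢ {((n₂:ℤ) + m + 1)}) := by
      ext ⟨a, b⟩
      simp only [Finset.mem_union, Finset.mem_filter, Finset.mem_product, Finset.mem_Icc,
        Finset.mem_singleton]
      push_cast
      omega
    have d1 : Disjoint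
        (((Finset.Icc (1:ℤ) ((k+1:ℕ) + (m:ℕ)) ×ˢ
          Finset.Icc (1:ℤ) ((n₂:ℤ) + (m:ℕ))).filter
        (fun w : ℤ × ℤ => 1 - (n₂:ℤ) ≤ w.1 - w.2 ∧ w.1 - w.2 ≤ ((k+1:ℕ):ℤ)))
        ∪ ({((k:ℤ) + m + 2)} ×ˢ Finset.Icc ((m:ℤ) + 1) ((n₂:ℤ) + m + 1)))
        (Finset.Icc ((m:ℤ) + 2) ((k:ℤ) + m + 1) ×ˢ {((n₂:ℤ) + m + 1)}) := by
      rw [Finset.disjoint_left]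
      rintro ⟨a, b⟩ hab hab'
      simp only [Finset.mem_union, Finset.mem_filter, Finset.mem_product, Finset.mem_Icc,
        Finset.mem_singleton] at hab hab'
      push_cast at hab
      omega
    have d2 : Disjoint
        ((Finset.Icc (1:ℤ) ((k+1:ℕ) + (m:ℕ)) ×ˢ
          Finset.Icc (1:ℤ) ((n₂:ℤ) + (m:ℕ))).filter
        (fun w : ℤ × ℤ => 1 - (n₂:ℤ) ≤ w.1 - w.2 ∧ w.1 - w.2 ≤ ((k+1:ℕ):ℤ)))
        ({((k:ℤ) + m + 2)} ×ˢ Finset.Icc ((m:ℤ) + 1) ((n₂:ℤ) + m + 1)) := by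
      rw [Finset.disjoint_left]
      rintro ⟨a, b⟩ hab hab'
      simp only [Finset.mem_filter, Finset.mem_product, Finset.mem_Icc,
        Finset.mem_singleton] at hab hab'
      push_cast at hab
      omega
    rw [key, Finset.card_union_of_disjoint d1, Finset.card_union_of_disjoint d2, ih]
    rw [Finset.card_product, Finset.card_product, Int.card_Icc, Int.card_Icc,
      Finset.card_singleton, Finset.card_singleton]
    have e1 : ((n₂:ℤ) + m + 1 + 1 - ((m:ℤ) + 1)).toNat = n₂ + 1 := by omega
    have e2 : ((k:ℤ) + m + 1 + 1 - ((m:ℤ) + 2)).toNat = k := by omega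
    rw [e1, e2]
    ring

lemma activeSet_eq_lower (n₁ n₂ n₃ : ℕ) (h₁ : 1 ≤ n₁) (h₂ : 1 ≤ n₂) (h₃ : 1 ≤ n₃)
    (v : ℤ × ℤ) :
    activeSet n₁ n₂ n₃ ⟨v, false⟩ =
      ↑((Finset.Icc (v.1 - (n₁:ℤ) - n₃ + 1) v.1 ×ˢ
         Finset.Icc (v.2 - (n₂:ℤ) - n₃ + 1) v.2).filter
        (fun w : ℤ × ℤ => v.1 - v.2 - (n₁:ℤ) + 1 ≤ w.1 - w.2 ∧
          w.1 - w.2 ≤ v.1 - v.2 + (n₂:ℤ))) := by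
  ext w
  rw [mem_activeSet_iff n₁ n₂ n₃ h₁ h₂ h₃]
  simp only [Finset.coe_filter, Set.mem_setOf_eq, Finset.mem_product, Finset.mem_Icc,
    Tri.toSet, Zop, Bool.false_eq_true, if_false, Set.mem_setOf_eq]
  constructor
  · rintro ⟨p, ⟨t1, t2, t3⟩, ⟨z1, z2, z3, z4, z5, z6⟩⟩
    have i1 : w.1 < v.1 + 1 := by exact_mod_cast (by push_cast; linarith : (w.1:ℝ) < v.1 + 1)
    have i2 : v.1 < w.1 + n₁ + n₃ := by
      exact_mod_cast (by push_cast; linarith : (v.1:ℝ) < w.1 + n₁ + n₃)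
    have i3 : w.2 < v.2 + 1 := by exact_mod_cast (by push_cast; linarith : (w.2:ℝ) < v.2 + 1)
    have i4 : v.2 < w.2 + n₂ + n₃ := by
      exact_mod_cast (by push_cast; linarith : (v.2:ℝ) < w.2 + n₂ + n₃)
    have i5 : v.1 - v.2 - n₁ < w.1 - w.2 := by
      exact_mod_cast (by push_cast; linarith : ((v.1:ℝ) - v.2 - n₁) < (w.1:ℝ) - w.2)
    have i6 : w.1 - w.2 < v.1 - v.2 + n₂ + 1 := by
      exact_mod_cast (by push_cast; linarith : ((w.1:ℝ) - w.2) < (v.1:ℝ) - v.2 + n₂ + 1)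
    omega
  · rintro ⟨⟨⟨j1, j2⟩, j3, j4⟩, j5, j6⟩
    have hw1 : (v.1:ℝ) - n₁ - n₃ + 1 ≤ w.1 := by exact_mod_cast j1
    have hw2 : (w.1:ℝ) ≤ v.1 := by exact_mod_cast j2
    have hw3 : (v.2:ℝ) - n₂ - n₃ + 1 ≤ w.2 := by exact_mod_cast j3
    have hw4 : (w.2:ℝ) ≤ v.2 := by exact_mod_cast j4
    have hw5 : (v.1:ℝ) - v.2 - n₁ + 1 ≤ (w.1:ℝ) - w.2 := by exact_mod_cast j5
    have hw6 : (w.1:ℝ) - w.2 ≤ (v.1:ℝ) - v.2 + n₂ := by exact_mod_cast j6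
    have hn1 : (1:ℝ) ≤ n₁ := by exact_mod_cast h₁
    have hn2 : (1:ℝ) ≤ n₂ := by exact_mod_cast h₂
    have hn3 : (1:ℝ) ≤ n₃ := by exact_mod_cast h₃
    obtain ⟨A, hA⟩ : ∃ x : ℝ, x = max ((v.1:ℝ) - v.2) ((w.1:ℝ) - w.2 - n₂) := ⟨_, rfl⟩
    obtain ⟨B, hB⟩ : ∃ x : ℝ, x = min ((w.1:ℝ) - w.2 + n₁) ((v.1:ℝ) - v.2 + 1) := ⟨_, rfl⟩
    have hAB : A < B := by
      simp only [hA, hB, max_lt_iff, lt_min_iff]; and_intros <;> linarith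
    obtain ⟨d, hd⟩ : ∃ x : ℝ, x = (A + B) / 2 := ⟨_, rfl⟩
    have hd1 : (v.1:ℝ) - v.2 < d := by
      have hstep : (v.1:ℝ) - v.2 ≤ A := by rw [hA]; exact le_max_left _ _
      linarith
    have hd2 : (w.1:ℝ) - w.2 - n₂ < d := by
      have hstep : (w.1:ℝ) - w.2 - n₂ ≤ A := by rw [hA]; exact le_max_right _ _
      linarith
    have hd3 : d < (w.1:ℝ) - w.2 + n₁ := by
      have hstep : B ≤ (w.1:ℝ) - w.2 + n₁ := by rw [hB]; exact min_le_left _ _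
      linarith
    have hd4 : d < (v.1:ℝ) - v.2 + 1 := by
      have hstep : B ≤ (v.1:ℝ) - v.2 + 1 := by rw [hB]; exact min_le_right _ _
      linarith
    obtain ⟨Ly, hLy⟩ : ∃ x : ℝ, x = max (max (v.2:ℝ) (w.2:ℝ)) ((w.1:ℝ) - d) := ⟨_, rfl⟩
    obtain ⟨Uy, hUy⟩ : ∃ x : ℝ, x = min (min ((w.2:ℝ) + n₂ + n₃) ((v.1:ℝ) + 1 - d)) ((w.1:ℝ) + n₁ + n₃ - d) := ⟨_, rfl⟩
    have hLU : Ly < Uy := by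
      simp only [hLy, hUy, max_lt_iff, lt_min_iff]; and_intros <;> linarith
    obtain ⟨y, hy⟩ : ∃ x : ℝ, x = (Ly + Uy) / 2 := ⟨_, rfl⟩
    have hy1 : (v.2:ℝ) < y := by
      have hstep : (v.2:ℝ) ≤ Ly := by rw [hLy]; exact le_trans (le_max_left _ _) (le_max_left _ _)
      linarith
    have hy2 : (w.2:ℝ) < y := by
      have hstep : (w.2:ℝ) ≤ Ly := by rw [hLy]; exact le_trans (le_max_right _ _) (le_max_left _ _)
      linarith
    have hy3 : (w.1:ℝ) - d < y := by
      have hstep : (w.1:ℝ) - d ≤ Ly := by rw [hLy]; exact le_max_right _ _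
      linarith
    have hy4 : y < (w.2:ℝ) + n₂ + n₃ := by
      have hstep : Uy ≤ (w.2:ℝ) + n₂ + n₃ := by rw [hUy]; exact le_trans (min_le_left _ _) (min_le_left _ _)
      linarith
    have hy5 : y < (v.1:ℝ) + 1 - d := by
      have hstep : Uy ≤ (v.1:ℝ) + 1 - d := by rw [hUy]; exact le_trans (min_le_left _ _) (min_le_right _ _)
      linarith
    have hy6 : y < (w.1:ℝ) + n₁ + n₃ - d := by
      have hstep : Uy ≤ (w.1:ℝ) + n₁ + n₃ - d := by rw [hUy]; exact min_le_right _ _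
      linarith
    refine ⟨(y + d, y), ⟨?_, ?_, ?_⟩, ?_, ?_, ?_, ?_, ?_, ?_⟩ <;> (try dsimp only) <;> (try push_cast) <;>
      linarith
  done

lemma activeSet_eq_upper (n₁ n₂ n₃ : ℕ) (h₁ : 1 ≤ n₁) (h₂ : 1 ≤ n₂) (h₃ : 1 ≤ n₃)
    (v : ℤ × ℤ) :
    activeSet n₁ n₂ n₃ ⟨v, true⟩ =
      ↑((Finset.Icc (v.1 - (n₁:ℤ) - n₃ + 1) v.1 ×ˢ
         Finset.Icc (v.2 - (n₂:ℤ) - n₃ + 1) v.2).filter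
        (fun w : ℤ × ℤ => v.1 - v.2 - (n₁:ℤ) ≤ w.1 - w.2 ∧
          w.1 - w.2 ≤ v.1 - v.2 + (n₂:ℤ) - 1)) := by
  ext w
  rw [mem_activeSet_iff n₁ n₂ n₃ h₁ h₂ h₃]
  simp only [Finset.coe_filter, Set.mem_setOf_eq, Finset.mem_product, Finset.mem_Icc,
    Tri.toSet, if_true, Zop, Set.mem_setOf_eq]
  constructor
  · rintro ⟨p, ⟨t1, t2, t3⟩, ⟨z1, z2, z3, z4, z5, z6⟩⟩
    have i1 : w.1 < v.1 + 1 := by exact_mod_cast (by push_cast; linarith : (w.1:ℝ) < v.1 + 1)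
    have i2 : v.1 < w.1 + n₁ + n₃ := by
      exact_mod_cast (by push_cast; linarith : (v.1:ℝ) < w.1 + n₁ + n₃)
    have i3 : w.2 < v.2 + 1 := by exact_mod_cast (by push_cast; linarith : (w.2:ℝ) < v.2 + 1)
    have i4 : v.2 < w.2 + n₂ + n₃ := by
      exact_mod_cast (by push_cast; linarith : (v.2:ℝ) < w.2 + n₂ + n₃)
    have i5 : v.1 - v.2 - n₁ - 1 < w.1 - w.2 := by
      exact_mod_cast (by push_cast; linarith : ((v.1:ℝ) - v.2 - n₁ - 1) < (w.1:ℝ) - w.2)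
    have i6 : w.1 - w.2 < v.1 - v.2 + n₂ := by
      exact_mod_cast (by push_cast; linarith : ((w.1:ℝ) - w.2) < (v.1:ℝ) - v.2 + n₂)
    omega
  · rintro ⟨⟨⟨j1, j2⟩, j3, j4⟩, j5, j6⟩
    have hw1 : (v.1:ℝ) - n₁ - n₃ + 1 ≤ w.1 := by exact_mod_cast j1
    have hw2 : (w.1:ℝ) ≤ v.1 := by exact_mod_cast j2
    have hw3 : (v.2:ℝ) - n₂ - n₃ + 1 ≤ w.2 := by exact_mod_cast j3
    have hw4 : (w.2:ℝ) ≤ v.2 := by exact_mod_cast j4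
    have hw5 : (v.1:ℝ) - v.2 - n₁ ≤ (w.1:ℝ) - w.2 := by exact_mod_cast j5
    have hw6 : (w.1:ℝ) - w.2 ≤ (v.1:ℝ) - v.2 + n₂ - 1 := by exact_mod_cast j6
    have hn1 : (1:ℝ) ≤ n₁ := by exact_mod_cast h₁
    have hn2 : (1:ℝ) ≤ n₂ := by exact_mod_cast h₂
    have hn3 : (1:ℝ) ≤ n₃ := by exact_mod_cast h₃
    obtain ⟨A, hA⟩ : ∃ x : ℝ, x = max ((w.1:ℝ) - w.2 - n₂) ((v.1:ℝ) - v.2 - 1) := ⟨_, rfl⟩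
    obtain ⟨B, hB⟩ : ∃ x : ℝ, x = min ((v.1:ℝ) - v.2) ((w.1:ℝ) - w.2 + n₁) := ⟨_, rfl⟩
    have hAB : A < B := by
      simp only [hA, hB, max_lt_iff, lt_min_iff]; and_intros <;> linarith
    obtain ⟨d, hd⟩ : ∃ x : ℝ, x = (A + B) / 2 := ⟨_, rfl⟩
    have hd1 : (w.1:ℝ) - w.2 - n₂ < d := by
      have hstep : (w.1:ℝ) - w.2 - n₂ ≤ A := by rw [hA]; exact le_max_left _ _
      linarith
    have hd2 : (v.1:ℝ) - v.2 - 1 < d := by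
      have hstep : (v.1:ℝ) - v.2 - 1 ≤ A := by rw [hA]; exact le_max_right _ _
      linarith
    have hd3 : d < (v.1:ℝ) - v.2 := by
      have hstep : B ≤ (v.1:ℝ) - v.2 := by rw [hB]; exact min_le_left _ _
      linarith
    have hd4 : d < (w.1:ℝ) - w.2 + n₁ := by
      have hstep : B ≤ (w.1:ℝ) - w.2 + n₁ := by rw [hB]; exact min_le_right _ _
      linarith
    obtain ⟨Ly, hLy⟩ : ∃ x : ℝ, x = max (max (w.2:ℝ) ((v.1:ℝ) - d)) ((w.1:ℝ) - d) := ⟨_, rfl⟩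
    obtain ⟨Uy, hUy⟩ : ∃ x : ℝ, x = min (min ((v.2:ℝ) + 1) ((w.2:ℝ) + n₂ + n₃)) ((w.1:ℝ) + n₁ + n₃ - d) := ⟨_, rfl⟩
    have hLU : Ly < Uy := by
      simp only [hLy, hUy, max_lt_iff, lt_min_iff]; and_intros <;> linarith
    obtain ⟨y, hy⟩ : ∃ x : ℝ, x = (Ly + Uy) / 2 := ⟨_, rfl⟩
    have hy1 : (w.2:ℝ) < y := by
      have hstep : (w.2:ℝ) ≤ Ly := by rw [hLy]; exact le_trans (le_max_left _ _) (le_max_left _ _)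
      linarith
    have hy2 : (v.1:ℝ) - d < y := by
      have hstep : (v.1:ℝ) - d ≤ Ly := by rw [hLy]; exact le_trans (le_max_right _ _) (le_max_left _ _)
      linarith
    have hy3 : (w.1:ℝ) - d < y := by
      have hstep : (w.1:ℝ) - d ≤ Ly := by rw [hLy]; exact le_max_right _ _
      linarith
    have hy4 : y < (v.2:ℝ) + 1 := by
      have hstep : Uy ≤ (v.2:ℝ) + 1 := by rw [hUy]; exact le_trans (min_le_left _ _) (min_le_left _ _)
      linarith
    have hy5 : y < (w.2:ℝ) + n₂ + n₃ := by
      have hstep : Uy ≤ (w.2:ℝ) + n₂ + n₃ := by rw [hUy]; exact le_trans (min_le_left _ _) (min_le_right _ _)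
      linarith
    have hy6 : y < (w.1:ℝ) + n₁ + n₃ - d := by
      have hstep : Uy ≤ (w.1:ℝ) + n₁ + n₃ - d := by rw [hUy]; exact min_le_right _ _
      linarith
    refine ⟨(y + d, y), ⟨?_, ?_, ?_⟩, ?_, ?_, ?_, ?_, ?_, ?_⟩ <;> (try dsimp only) <;> (try push_cast) <;>
      linarith
  done

/-- For all `nᵢ ≥ 1` and every triangle `△` of `G`, exactly
`φ(n) = n₁n₂ + n₁n₃ + n₂n₃` lattice translates of `B_n` are active on `△`. -/
theorem statement9 (n₁ n₂ n₃ : ℕ) (h₁ : 1 ≤ n₁) (h₂ : 1 ≤ n₂) (h₃ : 1 ≤ n₃)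
    (T : Tri) :
    (activeSet n₁ n₂ n₃ T).Finite ∧
    (activeSet n₁ n₂ n₃ T).ncard = n₁ * n₂ + n₁ * n₃ + n₂ * n₃ := by
  obtain ⟨v, up⟩ := T
  cases up with
  | false =>
    rw [activeSet_eq_lower n₁ n₂ n₃ h₁ h₂ h₃ v]
    refine ⟨Finset.finite_toSet _, ?_⟩
    rw [Set.ncard_coe_finset]
    rw [show ((Finset.Icc (v.1 - (n₁:ℤ) - n₃ + 1) v.1 ×ˢ
         Finset.Icc (v.2 - (n₂:ℤ) - n₃ + 1) v.2).filter
        (fun w : ℤ × ℤ => v.1 - v.2 - (n₁:ℤ) + 1 ≤ w.1 - w.2 ∧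
          w.1 - w.2 ≤ v.1 - v.2 + (n₂:ℤ))).card
      = ((Finset.Icc (1:ℤ) ((n₁:ℤ) + n₃) ×ˢ Finset.Icc (1:ℤ) ((n₂:ℤ) + n₃)).filter
          (fun w : ℤ × ℤ => 1 - (n₂:ℤ) ≤ w.1 - w.2 ∧ w.1 - w.2 ≤ (n₁:ℤ))).card from ?_]
    · exact countL n₁ n₂ h₁ h₂ n₃
    · apply Finset.card_bij
        (fun w _ => ((w.1 - v.1 + n₁ + n₃ : ℤ), (w.2 - v.2 + n₂ + n₃ : ℤ)))
      · rintro ⟨a, b⟩ ha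
        simp only [Finset.mem_filter, Finset.mem_product, Finset.mem_Icc] at ha ⊢
        omega
      · rintro ⟨a, b⟩ _ ⟨a', b'⟩ _ h
        simp only [Prod.mk.injEq] at h ⊢
        omega
      · rintro ⟨a, b⟩ hb
        simp only [Finset.mem_filter, Finset.mem_product, Finset.mem_Icc] at hb
        refine ⟨(a + v.1 - n₁ - n₃, b + v.2 - n₂ - n₃), ?_, ?_⟩
        · simp only [Finset.mem_filter, Finset.mem_product, Finset.mem_Icc]
          omega
        · simp only [Prod.mk.injEq]
          omega
  | true =>
    rw [activeSet_eq_upper n₁ n₂ n₃ h₁ h₂ h₃ v]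
    refine ⟨Finset.finite_toSet _, ?_⟩
    rw [Set.ncard_coe_finset]
    rw [show ((Finset.Icc (v.1 - (n₁:ℤ) - n₃ + 1) v.1 ×ˢ
         Finset.Icc (v.2 - (n₂:ℤ) - n₃ + 1) v.2).filter
        (fun w : ℤ × ℤ => v.1 - v.2 - (n₁:ℤ) ≤ w.1 - w.2 ∧
          w.1 - w.2 ≤ v.1 - v.2 + (n₂:ℤ) - 1)).card
      = ((Finset.Icc (1:ℤ) ((n₂:ℤ) + n₃) ×ˢ Finset.Icc (1:ℤ) ((n₁:ℤ) + n₃)).filter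
          (fun w : ℤ × ℤ => 1 - (n₁:ℤ) ≤ w.1 - w.2 ∧ w.1 - w.2 ≤ (n₂:ℤ))).card from ?_]
    · rw [countL n₂ n₁ h₂ h₁ n₃]; ring
    · apply Finset.card_bij
        (fun w _ => ((w.2 - v.2 + n₂ + n₃ : ℤ), (w.1 - v.1 + n₁ + n₃ : ℤ)))
      · rintro ⟨a, b⟩ ha
        simp only [Finset.mem_filter, Finset.mem_product, Finset.mem_Icc] at ha ⊢
        omega
      · rintro ⟨a, b⟩ _ ⟨a', b'⟩ _ h
        simp only [Prod.mk.injEq] at h ⊢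
        omega
      · rintro ⟨a, b⟩ hb
        simp only [Finset.mem_filter, Finset.mem_product, Finset.mem_Icc] at hb
        refine ⟨(b + v.1 - n₁ - n₃, a + v.2 - n₂ - n₃), ?_, ?_⟩
        · simp only [Finset.mem_filter, Finset.mem_product, Finset.mem_Icc]
          omega
        · simp only [Prod.mk.injEq]
          omega

end
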